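/- arXiv:1107.3688 — 2 statements merged into one kernel-verified Lean document; each statement's English description precedes it below -/
import Mathlib

section
/- Digit stabilization for convergent monotone approximations: if (a_n) is a nondecreasing sequence of reals converging to a limit L, and L is not a decimal rational (i.e., 10^k · L ∉ ℤ for all k ∈ ℕ), then for every decimal rank k there exists N such that for all n ≥ N, the k-th decimal digit of a_n equals the k-th decimal digit of L. -/
/-- The `k`-th decimal digit of a real number: `⌊10^k x⌋ mod 10`. -/
noncomputable def decimalDigit (k : ℕ) (x : ℝ) : ℤ := ⌊(10 : ℝ) ^ k * x⌋ % 10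

theorem digit_stabilization (a : ℕ → ℝ) (L : ℝ)
    (hmono : Monotone a) (hlim : Filter.Tendsto a Filter.atTop (nhds L))
    (hirr : ∀ k : ℕ, ¬ ∃ m : ℤ, (10 : ℝ) ^ k * L = (m : ℝ)) :
    ∀ k : ℕ, ∃ N : ℕ, ∀ n ≥ N, decimalDigit k (a n) = decimalDigit k L := by
  intro k
  set y := (10 : ℝ) ^ k * L with hy
  have hfloor : (⌊y⌋ : ℝ) < y := by
    rcases lt_or_eq_of_le (Int.floor_le y) with h | h
    · exact h
    · exact absurd ⟨⌊y⌋, h.symm⟩ (hirr k)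
  have hlim' : Filter.Tendsto (fun n => (10 : ℝ) ^ k * a n) Filter.atTop (nhds y) :=
    hlim.const_mul _
  have hev : ∀ᶠ n in Filter.atTop, (⌊y⌋ : ℝ) < (10 : ℝ) ^ k * a n :=
    hlim'.eventually (eventually_gt_nhds hfloor)
  rcases Filter.eventually_atTop.mp hev with ⟨N, hN⟩
  refine ⟨N, fun n hn => ?_⟩
  have hle : a n ≤ L := hmono.ge_of_tendsto hlim n
  have hle' : (10 : ℝ) ^ k * a n ≤ y := by
    apply mul_le_mul_of_nonneg_left hle (by positivity)
  have h1 : ⌊(10 : ℝ) ^ k * a n⌋ ≤ ⌊y⌋ := Int.floor_le_floor hle'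
  have h2 : ⌊y⌋ ≤ ⌊(10 : ℝ) ^ k * a n⌋ := Int.le_floor.mpr (hN n hn).le
  unfold decimalDigit
  rw [le_antisymm h1 h2]
end

section
/- The function 1/log(1/i) (equivalently −1/log i, for 0 < i < 1) is an infinitesimal of order 0 in Cauchy's sense: it tends to 0 as i → 0⁺, yet for every real r > 0, (1/log(1/i))/i^r → ∞ as i → 0⁺. -/
open Filter Real Topology

theorem inv_log_order_zero :
    Filter.Tendsto (fun i : ℝ => 1 / Real.log (1 / i))
      (nhdsWithin 0 (Set.Ioi 0)) (nhds 0) ∧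
    ∀ r : ℝ, 0 < r →
      Filter.Tendsto (fun i : ℝ => (1 / Real.log (1 / i)) / i ^ r)
        (nhdsWithin 0 (Set.Ioi 0)) Filter.atTop := by
  have hlog : Tendsto (fun i : ℝ => Real.log (1 / i)) (𝓝[>] 0) atTop :=
    by
    exact (Real.tendsto_log_atTop.comp tendsto_inv_nhdsGT_zero).congr fun i => by
      rw [Function.comp_apply, one_div]
  constructor
  · simpa [one_div, Pi.inv_def] using hlog.inv_tendsto_atTop
  · intro r hr
    have key : Tendsto (fun i : ℝ => Real.log (1 / i) * i ^ r) (𝓝[>] 0) (𝓝[>] 0) := by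
      have h0 : Tendsto (fun i : ℝ => Real.log (1 / i) * i ^ r) (𝓝[>] 0) (𝓝 0) := by
        have := (tendsto_log_mul_rpow_nhdsGT_zero hr).neg
        simp only [neg_zero] at this
        refine this.congr' ?_
        filter_upwards [self_mem_nhdsWithin] with i (hi : 0 < i)
        rw [Real.log_div one_ne_zero (ne_of_gt hi), Real.log_one]
        ring
      refine tendsto_nhdsWithin_iff.2 ⟨h0, ?_⟩
      filter_upwards [self_mem_nhdsWithin,
        eventually_nhdsWithin_of_eventually_nhds (eventually_lt_nhds zero_lt_one)]
        with i (hi : 0 < i) hi1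
      have : 1 < 1 / i := (one_lt_div hi).2 hi1
      exact mul_pos (Real.log_pos this) (Real.rpow_pos_of_pos hi r)
    have := tendsto_inv_nhdsGT_zero.comp key
    refine this.congr ?_
    intro i
    simp only [Function.comp, one_div]
    rw [mul_inv, div_eq_mul_inv]
end
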